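/- arXiv:1203.5496 — 3 statements merged into one kernel-verified Lean document; each statement's English description precedes it below -/
import Mathlib

section
/- Let H be a Hilbert space, a a bounded operator on H with ‖a‖ = 1, let 0 < c ≤ 1, n ≥ 1, and let ζ be a nonzero vector satisfying c‖(aa*)^n‖·‖ζ‖ ≤ ‖(aa*)^n ζ‖. Then there exists j ∈ {0, 1, …, n−1} such that c^{1/n} · ‖(aa*)^j ζ‖ ≤ ‖(aa*)^{j+1} ζ‖; in particular, setting η = a*(aa*)^j ζ, one has c^{1/n}‖a‖‖η‖ ≤ ‖a η‖. -/
/- ℓ²(X, H) is modeled as `lp (fun _ : X => H) 2`; `delta x` is the standard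
basis vector δ_x of ℓ²(X) = ℓ²(X, ℂ); `projSet s` is the orthogonal projection
of ℓ²(X, H) onto the coordinates in the finite set `s` (for a ball `N(x,S)` this
is the projection `P_x` onto ℓ²(N(x,S))).  The matrix coefficient
a_{y,z} = ⟨a δ_z, δ_y⟩ (linear in the first variable, as in the paper) is
`⟪delta y, a (delta z)⟫_ℂ` in Mathlib's convention (conjugate-linear in the
first slot), and the mathematicians' inner product ⟨u, v⟩ is `⟪v, u⟫_ℂ`. -/

noncomputable section
open scoped InnerProductSpace ComplexOrder ENNReal

attribute [local instance] Classical.propDecidable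

abbrev l2 (X : Type*) (H : Type*) [NormedAddCommGroup H] [InnerProductSpace ℂ H] :
    Type _ := lp (fun _ : X => H) 2

variable {X : Type*} {H : Type*} [NormedAddCommGroup H] [InnerProductSpace ℂ H]

/-- standard basis vector δ_x of ℓ²(X). -/
def delta (x : X) : l2 X ℂ := lp.single 2 x 1

/-- evaluation at a point, as a continuous linear map ℓ²(X,H) → H. -/
def evalCLM (x : X) : l2 X H →L[ℂ] H :=
  LinearMap.mkContinuous
    { toFun := fun f => f x
      map_add' := fun f g => by simp [lp.coeFn_add]
      map_smul' := fun c f => by simp [lp.coeFn_smul] }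
    1 (fun f => by rw [one_mul]; exact lp.norm_apply_le_norm (by norm_num) f x)

/-- insertion at a point, as a continuous linear map H → ℓ²(X,H). -/
def singleCLM (x : X) : H →L[ℂ] l2 X H :=
  LinearMap.mkContinuous
    { toFun := fun v => lp.single 2 x v
      map_add' := fun v w => by
        apply lp.ext
        funext j
        by_cases h : j = x
        · subst h; simp [lp.single_apply_self, lp.coeFn_add]
        · simp [lp.single_apply_ne 2 x _ h, lp.coeFn_add]
      map_smul' := fun c v => by simpa using lp.single_smul 2 x v c }
    1 (fun v => by
      have : ‖(lp.single 2 x v : l2 X H)‖ = ‖v‖ := by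
        simpa using lp.norm_single (p := 2) (by norm_num) (fun _ : X => v) x
      simp [this])

/-- orthogonal projection of ℓ²(X,H) onto the coordinates in a finite set. -/
def projSet (s : Finset X) : l2 X H →L[ℂ] l2 X H :=
  ∑ y ∈ s, (singleCLM y) ∘L (evalCLM y)

/-- if ‖a‖ = 1 and c‖(aa*)ⁿ‖‖ζ‖ ≤ ‖(aa*)ⁿζ‖, then some telescoping
factor is at least c^{1/n}, and η = a*(aa*)ʲζ satisfies c^{1/n}‖a‖‖η‖ ≤ ‖aη‖. -/
theorem stmt3 {H : Type*} [NormedAddCommGroup H] [InnerProductSpace ℂ H] [CompleteSpace H]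
    (a : H →L[ℂ] H) (ha : ‖a‖ = 1) (c : ℝ) (hc0 : 0 < c) (hc1 : c ≤ 1)
    (n : ℕ) (hn : 1 ≤ n) (ζ : H) (hζ : ζ ≠ 0)
    (hloc : c * ‖(a ∘L ContinuousLinearMap.adjoint a) ^ n‖ * ‖ζ‖ ≤
      ‖((a ∘L ContinuousLinearMap.adjoint a) ^ n) ζ‖) :
    ∃ j : ℕ, j < n ∧
      c ^ ((1 : ℝ) / n) * ‖((a ∘L ContinuousLinearMap.adjoint a) ^ j) ζ‖ ≤
        ‖((a ∘L ContinuousLinearMap.adjoint a) ^ (j + 1)) ζ‖ ∧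
      c ^ ((1 : ℝ) / n) * ‖a‖ *
          ‖(ContinuousLinearMap.adjoint a) (((a ∘L ContinuousLinearMap.adjoint a) ^ j) ζ)‖ ≤
        ‖a ((ContinuousLinearMap.adjoint a) (((a ∘L ContinuousLinearMap.adjoint a) ^ j) ζ))‖ := by
  classical
  set T := a ∘L ContinuousLinearMap.adjoint a with hT
  have hTnorm : ‖T‖ = 1 := by
    have : ‖ContinuousLinearMap.adjoint (ContinuousLinearMap.adjoint a) ∘L
        ContinuousLinearMap.adjoint a‖ = ‖ContinuousLinearMap.adjoint a‖ *
        ‖ContinuousLinearMap.adjoint a‖ :=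
      ContinuousLinearMap.norm_adjoint_comp_self (ContinuousLinearMap.adjoint a)
    rw [ContinuousLinearMap.adjoint_adjoint] at this
    have hadj : ‖ContinuousLinearMap.adjoint a‖ = ‖a‖ :=
      LinearIsometryEquiv.norm_map ContinuousLinearMap.adjoint a
    rw [hT, this, hadj, ha]; ring
  have hTsa : IsSelfAdjoint T := by
    rw [ContinuousLinearMap.isSelfAdjoint_iff']
    rw [hT, ContinuousLinearMap.adjoint_comp, ContinuousLinearMap.adjoint_adjoint]
  have hadj : ‖ContinuousLinearMap.adjoint a‖ = ‖a‖ :=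
    LinearIsometryEquiv.norm_map ContinuousLinearMap.adjoint a
  have hpow_le : ∀ k : ℕ, ‖T ^ k‖ ≤ 1 := by
    intro k
    rcases Nat.eq_zero_or_pos k with hk | hk
    · rw [hk, pow_zero]
      simpa [ContinuousLinearMap.one_def] using
        (ContinuousLinearMap.norm_id_le : ‖ContinuousLinearMap.id ℂ H‖ ≤ 1)
    · calc ‖T ^ k‖ ≤ ‖T‖ ^ k := norm_pow_le' T hk
        _ = 1 := by rw [hTnorm, one_pow]
  have hpow2 : ‖T ^ (2 ^ n)‖ = 1 := by
    have := hTsa.nnnorm_pow_two_pow n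
    have h' : ‖T ^ (2 ^ n)‖ = ‖T‖ ^ (2 ^ n) := by
      have := congrArg (fun x : NNReal => (x : ℝ)) this
      simpa using this
    rw [h', hTnorm, one_pow]
  have hTn1 : (1 : ℝ) ≤ ‖T ^ n‖ := by
    have hle : n ≤ 2 ^ n := Nat.le_of_lt (Nat.lt_two_pow_self (n := n))
    have : T ^ (2 ^ n) = T ^ n * T ^ (2 ^ n - n) := by
      rw [← pow_add, Nat.add_sub_cancel' hle]
    have h2 : (1 : ℝ) ≤ ‖T ^ n‖ * ‖T ^ (2 ^ n - n)‖ := by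
      rw [← hpow2, this]; exact norm_mul_le _ _
    calc (1 : ℝ) ≤ ‖T ^ n‖ * ‖T ^ (2 ^ n - n)‖ := h2
      _ ≤ ‖T ^ n‖ * 1 := by
          have : (0:ℝ) ≤ ‖T ^ n‖ := norm_nonneg _
          exact mul_le_mul_of_nonneg_left (hpow_le _) this
      _ = ‖T ^ n‖ := mul_one _
  set s : ℝ := c ^ ((1 : ℝ) / n) with hs
  have hs0 : 0 < s := Real.rpow_pos_of_pos hc0 _
  have hsn : s ^ n = c := by
    rw [hs, ← Real.rpow_natCast (c ^ ((1:ℝ)/n)) n, ← Real.rpow_mul hc0.le]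
    have hn0 : (n : ℝ) ≠ 0 := Nat.cast_ne_zero.mpr (by omega)
    rw [one_div, inv_mul_cancel₀ hn0, Real.rpow_one]
  have key : ∃ j : ℕ, j < n ∧ s * ‖(T ^ j) ζ‖ ≤ ‖(T ^ (j + 1)) ζ‖ := by
    by_contra h
    push_neg at h
    have hind : ∀ k : ℕ, 1 ≤ k → k ≤ n → ‖(T ^ k) ζ‖ < s ^ k * ‖ζ‖ := by
      intro k hk1
      induction k, hk1 using Nat.le_induction with
      | base =>
          intro hkn
          have := h 0 (Nat.lt_of_lt_of_le Nat.zero_lt_one hkn)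
          simpa using this
      | succ k hk ih =>
          intro hkn
          have hk' : k ≤ n := Nat.le_of_succ_le hkn
          have h1 : ‖(T ^ (k + 1)) ζ‖ < s * ‖(T ^ k) ζ‖ :=
            h k (Nat.lt_of_succ_le hkn)
          have h2 : ‖(T ^ k) ζ‖ < s ^ k * ‖ζ‖ := ih hk'
          calc ‖(T ^ (k + 1)) ζ‖ < s * ‖(T ^ k) ζ‖ := h1
            _ < s * (s ^ k * ‖ζ‖) := by exact mul_lt_mul_of_pos_left h2 hs0
            _ = s ^ (k + 1) * ‖ζ‖ := by ring
    have hfin : ‖(T ^ n) ζ‖ < c * ‖ζ‖ := by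
      have := hind n hn le_rfl
      rwa [hsn] at this
    have hζpos : 0 < ‖ζ‖ := norm_pos_iff.mpr hζ
    have : c * ‖ζ‖ ≤ c * ‖T ^ n‖ * ‖ζ‖ := by
      have h1 : c * 1 * ‖ζ‖ ≤ c * ‖T ^ n‖ * ‖ζ‖ :=
        mul_le_mul_of_nonneg_right (mul_le_mul_of_nonneg_left hTn1 hc0.le) (norm_nonneg ζ)
      simpa using h1
    linarith
  obtain ⟨j, hj, hkey⟩ := key
  refine ⟨j, hj, hkey, ?_⟩
  have heq : (T ^ (j + 1)) ζ = a ((ContinuousLinearMap.adjoint a) ((T ^ j) ζ)) := by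
    rw [pow_succ']
    rfl
  have hηle : ‖(ContinuousLinearMap.adjoint a) ((T ^ j) ζ)‖ ≤ ‖(T ^ j) ζ‖ := by
    calc ‖(ContinuousLinearMap.adjoint a) ((T ^ j) ζ)‖
        ≤ ‖ContinuousLinearMap.adjoint a‖ * ‖(T ^ j) ζ‖ :=
          (ContinuousLinearMap.adjoint a).le_opNorm _
      _ = ‖(T ^ j) ζ‖ := by rw [hadj, ha, one_mul]
  rw [ha, mul_one, ← heq]
  calc s * ‖(ContinuousLinearMap.adjoint a) ((T ^ j) ζ)‖
      ≤ s * ‖(T ^ j) ζ‖ := mul_le_mul_of_nonneg_left hηle hs0.le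
    _ ≤ ‖(T ^ (j + 1)) ζ‖ := hkey
end
end

section
/- Let X be a discrete metric space with bounded geometry. Suppose that for every ε > 0 and R > 0 there exist S > 0 and unit vectors {ξ_x}_{x∈X} ⊆ ℓ²(X) with supp(ξ_x) ⊆ N(x,S) and ‖ξ_y − ξ_z‖ < ε whenever d(y,z) ≤ R (i.e., X has property A in the form of Proposition 3.2(2) of Tu). Then X satisfies: for every ε' > 0 and R > 0 there exists S' > R such that (1 − ε')‖a‖ ≤ sup_{x∈X} ‖[a_{y,z}]_{y,z∈N(x,S')}‖ for every bounded operator a on ℓ²(X) of propagation at most R. -/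
/- ℓ²(X, H) is modeled as `lp (fun _ : X => H) 2`; `delta x` is the standard
basis vector δ_x of ℓ²(X) = ℓ²(X, ℂ); `projSet s` is the orthogonal projection
of ℓ²(X, H) onto the coordinates in the finite set `s` (for a ball `N(x,S)` this
is the projection `P_x` onto ℓ²(N(x,S))).  The matrix coefficient
a_{y,z} = ⟨a δ_z, δ_y⟩ (linear in the first variable, as in the paper) is
`⟪delta y, a (delta z)⟫_ℂ` in Mathlib's convention (conjugate-linear in the
first slot), and the mathematicians' inner product ⟨u, v⟩ is `⟪v, u⟫_ℂ`. -/

noncomputable section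
open scoped InnerProductSpace ComplexOrder ENNReal

attribute [local instance] Classical.propDecidable

variable {X : Type*} {H : Type*} [NormedAddCommGroup H] [InnerProductSpace ℂ H]

section HelpersONL

variable {X : Type*}

lemma single_eq_smul_delta (z : X) (c : ℂ) :
    (lp.single 2 z c : l2 X ℂ) = c • delta z := by
  rw [delta, ← lp.single_smul]
  simp

lemma sum_single_coe (s : Finset X) (c : X → ℂ) (j : X) :
    (∑ z ∈ s, lp.single 2 z (c z) : l2 X ℂ) j = if j ∈ s then c j else 0 := by
  simp only [lp.coeFn_sum, Finset.sum_apply, lp.single_apply, Finset.sum_dite_eq, Pi.single_apply,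
    Finset.sum_ite_eq]

lemma projSet_apply (s : Finset X) (f : l2 X ℂ) :
    projSet s f = ∑ y ∈ s, lp.single 2 y (f y) := by
  simp [projSet, ContinuousLinearMap.sum_apply]
  rfl

lemma projSet_coe (s : Finset X) (f : l2 X ℂ) (j : X) :
    (projSet s f) j = if j ∈ s then f j else 0 := by
  rw [projSet_apply, sum_single_coe]

lemma eq_sum_single {s : Finset X} {u : l2 X ℂ} (hu : ∀ j ∉ s, u j = 0) :
    u = ∑ z ∈ s, lp.single 2 z (u z) := by
  apply lp.ext
  funext j
  rw [sum_single_coe]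
  split_ifs with h
  · rfl
  · exact hu j h

lemma projSet_eq_self {s : Finset X} {u : l2 X ℂ} (hu : ∀ j ∉ s, u j = 0) :
    projSet s u = u := by
  apply lp.ext
  funext j
  rw [projSet_coe]
  split_ifs with h
  · rfl
  · exact (hu j h).symm

lemma inner_delta_left (y : X) (x : l2 X ℂ) : ⟪delta y, x⟫_ℂ = x y := by
  classical
  rw [delta, lp.inner_single_left]
  simp [RCLike.inner_apply]

lemma inner_projSet (s : Finset X) (u v : l2 X ℂ) :
    ⟪projSet s u, v⟫_ℂ = ⟪u, projSet s v⟫_ℂ := by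
  classical
  rw [projSet_apply, projSet_apply, sum_inner, inner_sum]
  refine Finset.sum_congr rfl fun y _ => ?_
  rw [lp.inner_single_left, lp.inner_single_right]

lemma norm_sq_supported {s : Finset X} {u : l2 X ℂ} (hu : ∀ j ∉ s, u j = 0) :
    ‖u‖ ^ 2 = ∑ z ∈ s, ‖u z‖ ^ 2 := by
  classical
  have h1 : ⟪u, u⟫_ℂ = ∑ z ∈ s, ⟪u z, u z⟫_ℂ := by
    rw [lp.inner_eq_tsum]
    exact tsum_eq_sum (fun i hi => by rw [hu i hi]; simp)
  have h2 : RCLike.re ⟪u, u⟫_ℂ = ‖u‖ ^ 2 := inner_self_eq_norm_sq u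
  rw [← h2, h1, map_sum]
  exact Finset.sum_congr rfl fun z _ => inner_self_eq_norm_sq (𝕜 := ℂ) (u z)

lemma sum_norm_sq_le (s : Finset X) (u : l2 X ℂ) :
    ∑ z ∈ s, ‖u z‖ ^ 2 ≤ ‖u‖ ^ 2 := by
  have h := lp.sum_rpow_le_norm_rpow (p := 2) (by norm_num) u s
  have h2 : ((2:ℝ≥0∞)).toReal = (2:ℝ) := rfl
  rw [h2] at h
  calc ∑ z ∈ s, ‖u z‖ ^ 2 = ∑ z ∈ s, ‖u z‖ ^ (2:ℝ) := by
        refine Finset.sum_congr rfl fun z _ => ?_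
        rw [show ((2:ℝ)) = ((2:ℕ):ℝ) by norm_num, Real.rpow_natCast]
    _ ≤ ‖u‖ ^ (2:ℝ) := h
    _ = ‖u‖ ^ 2 := by rw [show ((2:ℝ)) = ((2:ℕ):ℝ) by norm_num, Real.rpow_natCast]

lemma norm_delta (y : X) : ‖(delta y : l2 X ℂ)‖ = 1 := by
  have : ‖(lp.single 2 y (1:ℂ) : l2 X ℂ)‖ = ‖(1:ℂ)‖ := by
    simpa using lp.norm_single (p := 2) (by norm_num) (fun _ : X => (1:ℂ)) y
  simpa [delta] using this

lemma matrix_coeff_bound (a : l2 X ℂ →L[ℂ] l2 X ℂ) (y z : X) :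
    ‖⟪delta y, a (delta z)⟫_ℂ‖ ≤ ‖a‖ := by
  calc ‖⟪delta y, a (delta z)⟫_ℂ‖ ≤ ‖(delta y : l2 X ℂ)‖ * ‖a (delta z)‖ :=
        norm_inner_le_norm _ _
    _ ≤ 1 * (‖a‖ * ‖(delta z : l2 X ℂ)‖) := by
        rw [norm_delta]
        exact mul_le_mul_of_nonneg_left (a.le_opNorm _) zero_le_one
    _ = ‖a‖ := by rw [norm_delta]; ring

lemma projSet_norm_le (s : Finset X) :
    ‖(projSet s : l2 X ℂ →L[ℂ] l2 X ℂ)‖ ≤ s.card := by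
  refine le_trans (norm_sum_le _ _) ?_
  have : ∀ y ∈ s, ‖(singleCLM y : ℂ →L[ℂ] l2 X ℂ) ∘L (evalCLM y : l2 X ℂ →L[ℂ] ℂ)‖ ≤ 1 := by
    intro y _
    refine le_trans (ContinuousLinearMap.opNorm_comp_le _ _) ?_
    have h1 : ‖(singleCLM y : ℂ →L[ℂ] l2 X ℂ)‖ ≤ 1 :=
      LinearMap.mkContinuous_norm_le _ zero_le_one _
    have h2 : ‖(evalCLM y : l2 X ℂ →L[ℂ] ℂ)‖ ≤ 1 :=
      LinearMap.mkContinuous_norm_le _ zero_le_one _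
    calc ‖(singleCLM y : ℂ →L[ℂ] l2 X ℂ)‖ * ‖(evalCLM y : l2 X ℂ →L[ℂ] ℂ)‖ ≤ 1 * 1 :=
          mul_le_mul h1 h2 (norm_nonneg _) zero_le_one
      _ = 1 := one_mul 1
  calc ∑ y ∈ s, ‖(singleCLM y : ℂ →L[ℂ] l2 X ℂ) ∘L (evalCLM y : l2 X ℂ →L[ℂ] ℂ)‖
      ≤ ∑ _y ∈ s, (1:ℝ) := Finset.sum_le_sum this
    _ = s.card := by simp

/-- matrix expansion of the sesquilinear form on finitely supported vectors. -/
lemma inner_matrix_expansion (a : l2 X ℂ →L[ℂ] l2 X ℂ) (s : Finset X) (φ ψ : X → ℂ) :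
    ⟪(∑ y ∈ s, lp.single 2 y (ψ y) : l2 X ℂ), a (∑ z ∈ s, lp.single 2 z (φ z))⟫_ℂ =
      ∑ z ∈ s, ∑ y ∈ s, φ z * ((starRingEnd ℂ) (ψ y) * ⟪delta y, a (delta z)⟫_ℂ) := by
  classical
  rw [map_sum, inner_sum]
  refine Finset.sum_congr rfl fun z _ => ?_
  rw [single_eq_smul_delta, map_smul, inner_smul_right, sum_inner, Finset.mul_sum]
  refine Finset.sum_congr rfl fun y _ => ?_
  rw [lp.inner_single_left]
  simp [RCLike.inner_apply, inner_delta_left]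
  exact Or.inl (mul_comm _ _)


lemma inner_eq_sum_of_support {F : Finset X} {g : l2 X ℂ} (hg : ∀ w ∉ F, g w = 0)
    (f : l2 X ℂ) : ⟪f, g⟫_ℂ = ∑ w ∈ F, (starRingEnd ℂ) (f w) * g w := by
  rw [lp.inner_eq_tsum, tsum_eq_sum (f := fun w => ⟪f w, g w⟫_ℂ)
    (fun w hw => by simp only []; rw [hg w hw]; simp)]
  exact Finset.sum_congr rfl fun w _ => by simp [RCLike.inner_apply]; ring

lemma one_sub_inner_bound {ε : ℝ} {ξ η : l2 X ℂ} (hξ : ‖ξ‖ = 1) (hd : ‖ξ - η‖ < ε) :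
    ‖1 - ⟪ξ, η⟫_ℂ‖ ≤ ε := by
  have h1 : (1 : ℂ) - ⟪ξ, η⟫_ℂ = ⟪ξ, ξ - η⟫_ℂ := by
    rw [inner_sub_right]
    have : ⟪ξ, ξ⟫_ℂ = 1 := by rw [inner_self_eq_norm_sq_to_K, hξ]; norm_num
    rw [this]
  rw [h1]
  calc ‖⟪ξ, ξ - η⟫_ℂ‖ ≤ ‖ξ‖ * ‖ξ - η‖ := norm_inner_le_norm _ _
    _ = ‖ξ - η‖ := by rw [hξ, one_mul]
    _ ≤ ε := hd.le

end HelpersONL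

set_option maxHeartbeats 4000000 in
set_option synthInstance.maxHeartbeats 400000 in
/-- property A (in the form of Tu's Proposition 3.2(2): unit vectors
ξ_x supported in N(x,S) with ‖ξ_y − ξ_z‖ < ε for d(y,z) ≤ R) implies the operator
norm localization estimate (1 − ε')‖a‖ ≤ sup_x ‖P_x a P_x‖ (compression to balls
of radius S') for operators of propagation ≤ R. -/
theorem stmt9 {X : Type*} [MetricSpace X]
    (hfin : ∀ (x : X) (r : ℝ), (Metric.closedBall x r).Finite)
    (hbg : ∀ r : ℝ, ∃ C : ℕ, ∀ x : X, (Metric.closedBall x r).ncard ≤ C)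
    (hA : ∀ ε > (0 : ℝ), ∀ R > (0 : ℝ), ∃ S > (0 : ℝ), ∃ ξ : X → l2 X ℂ,
      (∀ x : X, ‖ξ x‖ = 1) ∧
      (∀ x y : X, (ξ x : ∀ _ : X, ℂ) y ≠ 0 → y ∈ Metric.closedBall x S) ∧
      (∀ y z : X, dist y z ≤ R → ‖ξ y - ξ z‖ < ε)) :
    ∀ ε' > (0 : ℝ), ∀ R > (0 : ℝ), ∃ S' > R,
      ∀ a : l2 X ℂ →L[ℂ] l2 X ℂ,
        (∀ y z : X, R < dist y z → ⟪delta y, a (delta z)⟫_ℂ = 0) →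
        (1 - ε') * ‖a‖ ≤
          ⨆ x : X, ‖projSet (hfin x S').toFinset ∘L a ∘L projSet (hfin x S').toFinset‖ := by
  intro ε' hε' R hR
  obtain ⟨C, hC⟩ := hbg R
  have hC1 : (0:ℝ) < (C:ℝ) + 1 := by positivity
  set ε : ℝ := ε' / ((C:ℝ) + 1) with hεdef
  have hε : 0 < ε := div_pos hε' hC1
  obtain ⟨S, hS, ξ, hξnorm, hξsupp, hξclose⟩ := hA ε hε R hR
  refine ⟨R + S + 1, by linarith, ?_⟩
  intro a ha
  set S' : ℝ := R + S + 1 with hS'def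
  set P : X → (l2 X ℂ →L[ℂ] l2 X ℂ) := fun x => projSet (hfin x S').toFinset with hPdef
  set M : ℝ := ⨆ x : X, ‖P x ∘L a ∘L P x‖ with hMdef
  by_cases hX : Nonempty X
  case neg =>
    have hae : a = 0 := by
      ext f
      have hf : f = 0 := by
        apply lp.ext; funext j; exact absurd (Nonempty.intro j) hX
      rw [hf]; simp
    have hiSup : M = 0 := by
      haveI : IsEmpty X := not_nonempty_iff.mp hX
      exact Real.iSup_of_isEmpty _
    rw [hae, hiSup, norm_zero, mul_zero]
  obtain ⟨x₀⟩ := hX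
  -- boundedness of the sup
  obtain ⟨C₂, hC₂⟩ := hbg S'
  have hPnorm : ∀ x : X, ‖P x‖ ≤ (C₂ : ℝ) := by
    intro x
    refine (projSet_norm_le _).trans ?_
    have h1 : (hfin x S').toFinset.card = (Metric.closedBall x S').ncard :=
      (Set.ncard_eq_toFinset_card _ (hfin x S')).symm
    exact_mod_cast h1 ▸ (Nat.cast_le.2 (hC₂ x))
  have hbdd : BddAbove (Set.range fun x : X => ‖P x ∘L a ∘L P x‖) := by
    refine ⟨(C₂:ℝ) * ‖a‖ * (C₂:ℝ), ?_⟩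
    rintro r ⟨x, rfl⟩
    calc ‖P x ∘L a ∘L P x‖ ≤ ‖P x‖ * ‖a ∘L P x‖ := ContinuousLinearMap.opNorm_comp_le _ _
      _ ≤ ‖P x‖ * (‖a‖ * ‖P x‖) := by
          refine mul_le_mul_of_nonneg_left (ContinuousLinearMap.opNorm_comp_le _ _)
            (norm_nonneg _)
      _ ≤ (C₂:ℝ) * (‖a‖ * (C₂:ℝ)) := by
          refine mul_le_mul (hPnorm x) ?_ (by positivity) (by positivity)
          exact mul_le_mul_of_nonneg_left (hPnorm x) (norm_nonneg _)
      _ = (C₂:ℝ) * ‖a‖ * (C₂:ℝ) := by ring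
  have hMx : ∀ x : X, ‖P x ∘L a ∘L P x‖ ≤ M := fun x => le_ciSup hbdd x
  have hM0 : 0 ≤ M := le_trans (norm_nonneg _) (hMx x₀)
  have hεC : ε * (C:ℝ) ≤ ε' := by
    have h1 : ε * ((C:ℝ) + 1) = ε' := div_mul_cancel₀ ε' hC1.ne'
    nlinarith
  -- cardinality counting
  have hcard : ∀ (z : X) (t : Finset X) (p : X → Prop),
      (∀ y, p y → y ∈ Metric.closedBall z R) → ((t.filter p).card : ℝ) ≤ C := by
    intro z t p hp
    have hsub : t.filter p ⊆ (hfin z R).toFinset := fun y hy =>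
      (hfin z R).mem_toFinset.2 (hp y (Finset.mem_filter.1 hy).2)
    calc ((t.filter p).card : ℝ) ≤ ((hfin z R).toFinset.card : ℝ) :=
          Nat.cast_le.2 (Finset.card_le_card hsub)
      _ = ((Metric.closedBall z R).ncard : ℝ) := by
          rw [Set.ncard_eq_toFinset_card _ (hfin z R)]
      _ ≤ C := Nat.cast_le.2 (hC z)
  -- the key half bound
  have key : ∀ (s : Finset X) (u v : l2 X ℂ), (∀ j ∉ s, u j = 0) → (∀ j ∉ s, v j = 0) →
      ‖⟪v, a u⟫_ℂ‖ ≤ (M + ε * (C:ℝ) * ‖a‖) * ((‖u‖^2 + ‖v‖^2)/2) := by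
    intro s u v hu hv
    classical
    set F : Finset X := s.biUnion (fun z => (hfin z S).toFinset) with hFdef
    have hξF : ∀ z ∈ s, ∀ w, w ∉ F → (ξ z) w = 0 := by
      intro z hz w hw
      by_contra hne
      exact hw (Finset.mem_biUnion.2 ⟨z, hz, (hfin z S).mem_toFinset.2 (hξsupp z w hne)⟩)
    have hexp : ⟪v, a u⟫_ℂ =
        ∑ z ∈ s, ∑ y ∈ s, u z * ((starRingEnd ℂ) (v y) * ⟪delta y, a (delta z)⟫_ℂ) := by
      conv_lhs => rw [eq_sum_single hv, eq_sum_single hu]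
      exact inner_matrix_expansion a s (fun z => u z) (fun y => v y)
    set uw : X → l2 X ℂ := fun w => ∑ z ∈ s, lp.single 2 z (u z * ξ z w) with huwdef
    set vw : X → l2 X ℂ := fun w => ∑ y ∈ s, lp.single 2 y (v y * ξ y w) with hvwdef
    have huwcoe : ∀ w j, (uw w) j = if j ∈ s then u j * ξ j w else 0 := fun w j =>
      sum_single_coe s (fun z => u z * ξ z w) j
    have hvwcoe : ∀ w j, (vw w) j = if j ∈ s then v j * ξ j w else 0 := fun w j =>
      sum_single_coe s (fun y => v y * ξ y w) j
    have hsplit : ⟪v, a u⟫_ℂ =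
        (∑ z ∈ s, ∑ y ∈ s, u z * ((starRingEnd ℂ) (v y) *
          (⟪ξ y, ξ z⟫_ℂ * ⟪delta y, a (delta z)⟫_ℂ)))
        + (∑ z ∈ s, ∑ y ∈ s, u z * ((starRingEnd ℂ) (v y) *
          ((1 - ⟪ξ y, ξ z⟫_ℂ) * ⟪delta y, a (delta z)⟫_ℂ))) := by
      rw [hexp, ← Finset.sum_add_distrib]
      refine Finset.sum_congr rfl fun z _ => ?_
      rw [← Finset.sum_add_distrib]
      refine Finset.sum_congr rfl fun y _ => ?_
      ring
    have hT1 : (∑ z ∈ s, ∑ y ∈ s, u z * ((starRingEnd ℂ) (v y) *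
          (⟪ξ y, ξ z⟫_ℂ * ⟪delta y, a (delta z)⟫_ℂ)))
        = ∑ w ∈ F, ⟪vw w, a (uw w)⟫_ℂ := by
      calc (∑ z ∈ s, ∑ y ∈ s, u z * ((starRingEnd ℂ) (v y) *
            (⟪ξ y, ξ z⟫_ℂ * ⟪delta y, a (delta z)⟫_ℂ)))
          = ∑ z ∈ s, ∑ y ∈ s, ∑ w ∈ F, (u z * ξ z w) *
              ((starRingEnd ℂ) (v y * ξ y w) * ⟪delta y, a (delta z)⟫_ℂ) := by
            refine Finset.sum_congr rfl fun z hz => Finset.sum_congr rfl fun y hy => ?_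
            rw [show ⟪ξ y, ξ z⟫_ℂ = ∑ w ∈ F, (starRingEnd ℂ) ((ξ y) w) * (ξ z) w from
              inner_eq_sum_of_support (hξF z hz) (ξ y)]
            rw [Finset.sum_mul, Finset.mul_sum, Finset.mul_sum]
            refine Finset.sum_congr rfl fun w _ => ?_
            rw [map_mul]
            ring
        _ = ∑ z ∈ s, ∑ w ∈ F, ∑ y ∈ s, (u z * ξ z w) *
              ((starRingEnd ℂ) (v y * ξ y w) * ⟪delta y, a (delta z)⟫_ℂ) :=
            Finset.sum_congr rfl fun z _ => Finset.sum_comm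
        _ = ∑ w ∈ F, ∑ z ∈ s, ∑ y ∈ s, (u z * ξ z w) *
              ((starRingEnd ℂ) (v y * ξ y w) * ⟪delta y, a (delta z)⟫_ℂ) :=
            Finset.sum_comm
        _ = ∑ w ∈ F, ⟪vw w, a (uw w)⟫_ℂ :=
            Finset.sum_congr rfl fun w _ =>
              (inner_matrix_expansion a s (fun z => u z * ξ z w) (fun y => v y * ξ y w)).symm
    have hsuppP : ∀ w : X, ∀ j, j ∉ (hfin w S').toFinset → (uw w) j = 0 := by
      intro w j hj
      rw [huwcoe]
      split_ifs with hjs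
      · by_contra h0
        have hξ0 : (ξ j) w ≠ 0 := fun hh => h0 (by rw [hh, mul_zero])
        have h2 : dist w j ≤ S := Metric.mem_closedBall.1 (hξsupp j w hξ0)
        refine hj ((hfin w S').mem_toFinset.2 ?_)
        rw [Metric.mem_closedBall, dist_comm j w, hS'def]
        linarith
      · rfl
    have hsuppPv : ∀ w : X, ∀ j, j ∉ (hfin w S').toFinset → (vw w) j = 0 := by
      intro w j hj
      rw [hvwcoe]
      split_ifs with hjs
      · by_contra h0
        have hξ0 : (ξ j) w ≠ 0 := fun hh => h0 (by rw [hh, mul_zero])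
        have h2 : dist w j ≤ S := Metric.mem_closedBall.1 (hξsupp j w hξ0)
        refine hj ((hfin w S').mem_toFinset.2 ?_)
        rw [Metric.mem_closedBall, dist_comm j w, hS'def]
        linarith
      · rfl
    have hw_bound : ∀ w ∈ F, ‖⟪vw w, a (uw w)⟫_ℂ‖ ≤ M * ((‖uw w‖^2 + ‖vw w‖^2)/2) := by
      intro w _
      have he : ⟪vw w, (P w ∘L a ∘L P w) (uw w)⟫_ℂ = ⟪vw w, a (uw w)⟫_ℂ := by
        simp only [hPdef, ContinuousLinearMap.comp_apply]
        rw [projSet_eq_self (hsuppP w), ← inner_projSet, projSet_eq_self (hsuppPv w)]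
      rw [← he]
      have hab : ‖uw w‖ * ‖vw w‖ ≤ (‖uw w‖^2 + ‖vw w‖^2)/2 := by
        nlinarith [sq_nonneg (‖uw w‖ - ‖vw w‖)]
      calc ‖⟪vw w, (P w ∘L a ∘L P w) (uw w)⟫_ℂ‖
          ≤ ‖vw w‖ * ‖(P w ∘L a ∘L P w) (uw w)‖ := norm_inner_le_norm _ _
        _ ≤ ‖vw w‖ * (‖P w ∘L a ∘L P w‖ * ‖uw w‖) :=
            mul_le_mul_of_nonneg_left (ContinuousLinearMap.le_opNorm _ _) (norm_nonneg _)
        _ ≤ ‖vw w‖ * (M * ‖uw w‖) :=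
            mul_le_mul_of_nonneg_left
              (mul_le_mul_of_nonneg_right (hMx w) (norm_nonneg _)) (norm_nonneg _)
        _ = M * (‖uw w‖ * ‖vw w‖) := by ring
        _ ≤ M * ((‖uw w‖^2 + ‖vw w‖^2)/2) := mul_le_mul_of_nonneg_left hab hM0
    have huwnorm : ∀ w, ‖uw w‖^2 = ∑ z ∈ s, ‖u z‖^2 * ‖(ξ z) w‖^2 := by
      intro w
      have hsupp : ∀ j ∉ s, (uw w) j = 0 := by
        intro j hj; rw [huwcoe, if_neg hj]
      rw [norm_sq_supported hsupp]
      refine Finset.sum_congr rfl fun z hz => ?_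
      rw [huwcoe, if_pos hz, norm_mul, mul_pow]
    have hvwnorm : ∀ w, ‖vw w‖^2 = ∑ z ∈ s, ‖v z‖^2 * ‖(ξ z) w‖^2 := by
      intro w
      have hsupp : ∀ j ∉ s, (vw w) j = 0 := by
        intro j hj; rw [hvwcoe, if_neg hj]
      rw [norm_sq_supported hsupp]
      refine Finset.sum_congr rfl fun z hz => ?_
      rw [hvwcoe, if_pos hz, norm_mul, mul_pow]
    have hξsum : ∀ z ∈ s, ∑ w ∈ F, ‖(ξ z) w‖^2 ≤ 1 := by
      intro z _
      calc ∑ w ∈ F, ‖(ξ z) w‖^2 ≤ ‖ξ z‖^2 := sum_norm_sq_le F (ξ z)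
        _ = 1 := by rw [hξnorm z]; norm_num
    have hsumu : ∑ w ∈ F, ‖uw w‖^2 ≤ ‖u‖^2 := by
      calc ∑ w ∈ F, ‖uw w‖^2 = ∑ w ∈ F, ∑ z ∈ s, ‖u z‖^2 * ‖(ξ z) w‖^2 :=
            Finset.sum_congr rfl (fun w _ => huwnorm w)
        _ = ∑ z ∈ s, ∑ w ∈ F, ‖u z‖^2 * ‖(ξ z) w‖^2 := Finset.sum_comm
        _ = ∑ z ∈ s, ‖u z‖^2 * ∑ w ∈ F, ‖(ξ z) w‖^2 :=
            Finset.sum_congr rfl fun z _ => (Finset.mul_sum _ _ _).symm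
        _ ≤ ∑ z ∈ s, ‖u z‖^2 * 1 := Finset.sum_le_sum fun z hz =>
            mul_le_mul_of_nonneg_left (hξsum z hz) (sq_nonneg _)
        _ = ‖u‖^2 := by simp only [mul_one]; exact (norm_sq_supported hu).symm
    have hsumv : ∑ w ∈ F, ‖vw w‖^2 ≤ ‖v‖^2 := by
      calc ∑ w ∈ F, ‖vw w‖^2 = ∑ w ∈ F, ∑ z ∈ s, ‖v z‖^2 * ‖(ξ z) w‖^2 :=
            Finset.sum_congr rfl (fun w _ => hvwnorm w)
        _ = ∑ z ∈ s, ∑ w ∈ F, ‖v z‖^2 * ‖(ξ z) w‖^2 := Finset.sum_comm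
        _ = ∑ z ∈ s, ‖v z‖^2 * ∑ w ∈ F, ‖(ξ z) w‖^2 :=
            Finset.sum_congr rfl fun z _ => (Finset.mul_sum _ _ _).symm
        _ ≤ ∑ z ∈ s, ‖v z‖^2 * 1 := Finset.sum_le_sum fun z hz =>
            mul_le_mul_of_nonneg_left (hξsum z hz) (sq_nonneg _)
        _ = ‖v‖^2 := by simp only [mul_one]; exact (norm_sq_supported hv).symm
    have hT1bound : ‖∑ w ∈ F, ⟪vw w, a (uw w)⟫_ℂ‖ ≤ M * ((‖u‖^2 + ‖v‖^2)/2) := by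
      calc ‖∑ w ∈ F, ⟪vw w, a (uw w)⟫_ℂ‖ ≤ ∑ w ∈ F, ‖⟪vw w, a (uw w)⟫_ℂ‖ := norm_sum_le _ _
        _ ≤ ∑ w ∈ F, M * ((‖uw w‖^2 + ‖vw w‖^2)/2) := Finset.sum_le_sum hw_bound
        _ = M/2 * ((∑ w ∈ F, ‖uw w‖^2) + (∑ w ∈ F, ‖vw w‖^2)) := by
            rw [← Finset.sum_add_distrib, Finset.mul_sum]
            exact Finset.sum_congr rfl fun w _ => by ring
        _ ≤ M/2 * (‖u‖^2 + ‖v‖^2) :=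
            mul_le_mul_of_nonneg_left (add_le_add hsumu hsumv) (by linarith)
        _ = M * ((‖u‖^2 + ‖v‖^2)/2) := by ring
    have hT2term : ∀ z ∈ s, ∀ y ∈ s,
        ‖u z * ((starRingEnd ℂ) (v y) * ((1 - ⟪ξ y, ξ z⟫_ℂ) * ⟪delta y, a (delta z)⟫_ℂ))‖ ≤
          (if dist y z ≤ R then ε * ‖a‖ * ((‖u z‖^2 + ‖v y‖^2)/2) else 0) := by
      intro z _ y _
      by_cases hd : dist y z ≤ R
      · rw [if_pos hd]
        have h1 : ‖(1:ℂ) - ⟪ξ y, ξ z⟫_ℂ‖ ≤ ε := one_sub_inner_bound (hξnorm y) (hξclose y z hd)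
        have h2 := matrix_coeff_bound a y z
        have e1 : ‖(1:ℂ) - ⟪ξ y, ξ z⟫_ℂ‖ * ‖⟪delta y, a (delta z)⟫_ℂ‖ ≤ ε * ‖a‖ :=
          mul_le_mul h1 h2 (norm_nonneg _) hε.le
        have e2 : ‖u z‖ * ‖v y‖ ≤ (‖u z‖^2 + ‖v y‖^2)/2 := by
          nlinarith [sq_nonneg (‖u z‖ - ‖v y‖)]
        calc ‖u z * ((starRingEnd ℂ) (v y) * ((1 - ⟪ξ y, ξ z⟫_ℂ) * ⟪delta y, a (delta z)⟫_ℂ))‖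
            = (‖u z‖ * ‖v y‖) * (‖(1:ℂ) - ⟪ξ y, ξ z⟫_ℂ‖ * ‖⟪delta y, a (delta z)⟫_ℂ‖) := by
              rw [norm_mul, norm_mul, norm_mul, RCLike.norm_conj]
              ring
          _ ≤ ((‖u z‖^2 + ‖v y‖^2)/2) * (ε * ‖a‖) :=
              mul_le_mul e2 e1 (by positivity) (by positivity)
          _ = ε * ‖a‖ * ((‖u z‖^2 + ‖v y‖^2)/2) := by ring
      · rw [if_neg hd, ha y z (not_le.1 hd)]
        simp
    have hcard1 : ∑ z ∈ s, ∑ y ∈ s, (if dist y z ≤ R then ‖u z‖^2 else 0) ≤ (C:ℝ) * ‖u‖^2 := by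
      calc ∑ z ∈ s, ∑ y ∈ s, (if dist y z ≤ R then ‖u z‖^2 else 0)
          = ∑ z ∈ s, ((s.filter (fun y => dist y z ≤ R)).card : ℝ) * ‖u z‖^2 := by
            refine Finset.sum_congr rfl fun z _ => ?_
            rw [← Finset.sum_filter, Finset.sum_const, nsmul_eq_mul]
        _ ≤ ∑ z ∈ s, (C:ℝ) * ‖u z‖^2 := Finset.sum_le_sum fun z _ =>
            mul_le_mul_of_nonneg_right
              (hcard z s _ (fun y hy => Metric.mem_closedBall.2 hy)) (sq_nonneg _)
        _ = (C:ℝ) * ∑ z ∈ s, ‖u z‖^2 := (Finset.mul_sum _ _ _).symm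
        _ = (C:ℝ) * ‖u‖^2 := by rw [← norm_sq_supported hu]
    have hcard2 : ∑ z ∈ s, ∑ y ∈ s, (if dist y z ≤ R then ‖v y‖^2 else 0) ≤ (C:ℝ) * ‖v‖^2 := by
      calc ∑ z ∈ s, ∑ y ∈ s, (if dist y z ≤ R then ‖v y‖^2 else 0)
          = ∑ y ∈ s, ∑ z ∈ s, (if dist y z ≤ R then ‖v y‖^2 else 0) := Finset.sum_comm
        _ = ∑ y ∈ s, ((s.filter (fun z => dist y z ≤ R)).card : ℝ) * ‖v y‖^2 := by
            refine Finset.sum_congr rfl fun y _ => ?_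
            rw [← Finset.sum_filter, Finset.sum_const, nsmul_eq_mul]
        _ ≤ ∑ y ∈ s, (C:ℝ) * ‖v y‖^2 := Finset.sum_le_sum fun y _ =>
            mul_le_mul_of_nonneg_right
              (hcard y s _ (fun z hz => Metric.mem_closedBall.2 (by rw [dist_comm]; exact hz)))
              (sq_nonneg _)
        _ = (C:ℝ) * ∑ y ∈ s, ‖v y‖^2 := (Finset.mul_sum _ _ _).symm
        _ = (C:ℝ) * ‖v‖^2 := by rw [← norm_sq_supported hv]
    have hT2bound : ‖∑ z ∈ s, ∑ y ∈ s, u z * ((starRingEnd ℂ) (v y) *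
          ((1 - ⟪ξ y, ξ z⟫_ℂ) * ⟪delta y, a (delta z)⟫_ℂ))‖
        ≤ ε * (C:ℝ) * ‖a‖ * ((‖u‖^2 + ‖v‖^2)/2) := by
      calc ‖∑ z ∈ s, ∑ y ∈ s, u z * ((starRingEnd ℂ) (v y) *
            ((1 - ⟪ξ y, ξ z⟫_ℂ) * ⟪delta y, a (delta z)⟫_ℂ))‖
          ≤ ∑ z ∈ s, ‖∑ y ∈ s, u z * ((starRingEnd ℂ) (v y) *
            ((1 - ⟪ξ y, ξ z⟫_ℂ) * ⟪delta y, a (delta z)⟫_ℂ))‖ := norm_sum_le _ _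
        _ ≤ ∑ z ∈ s, ∑ y ∈ s, ‖u z * ((starRingEnd ℂ) (v y) *
            ((1 - ⟪ξ y, ξ z⟫_ℂ) * ⟪delta y, a (delta z)⟫_ℂ))‖ :=
            Finset.sum_le_sum fun z _ => norm_sum_le _ _
        _ ≤ ∑ z ∈ s, ∑ y ∈ s, (if dist y z ≤ R then ε * ‖a‖ * ((‖u z‖^2 + ‖v y‖^2)/2) else 0) :=
            Finset.sum_le_sum fun z hz => Finset.sum_le_sum fun y hy => hT2term z hz y hy
        _ = ε * ‖a‖ / 2 * ((∑ z ∈ s, ∑ y ∈ s, (if dist y z ≤ R then ‖u z‖^2 else 0))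
              + (∑ z ∈ s, ∑ y ∈ s, (if dist y z ≤ R then ‖v y‖^2 else 0))) := by
            rw [← Finset.sum_add_distrib, Finset.mul_sum]
            refine Finset.sum_congr rfl fun z _ => ?_
            rw [← Finset.sum_add_distrib, Finset.mul_sum]
            refine Finset.sum_congr rfl fun y _ => ?_
            split_ifs <;> ring
        _ ≤ ε * ‖a‖ / 2 * ((C:ℝ) * ‖u‖^2 + (C:ℝ) * ‖v‖^2) :=
            mul_le_mul_of_nonneg_left (add_le_add hcard1 hcard2) (by positivity)
        _ = ε * (C:ℝ) * ‖a‖ * ((‖u‖^2 + ‖v‖^2)/2) := by ring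
    calc ‖⟪v, a u⟫_ℂ‖
        = ‖(∑ z ∈ s, ∑ y ∈ s, u z * ((starRingEnd ℂ) (v y) *
            (⟪ξ y, ξ z⟫_ℂ * ⟪delta y, a (delta z)⟫_ℂ)))
          + (∑ z ∈ s, ∑ y ∈ s, u z * ((starRingEnd ℂ) (v y) *
            ((1 - ⟪ξ y, ξ z⟫_ℂ) * ⟪delta y, a (delta z)⟫_ℂ)))‖ := by rw [← hsplit]
      _ ≤ ‖∑ z ∈ s, ∑ y ∈ s, u z * ((starRingEnd ℂ) (v y) *
            (⟪ξ y, ξ z⟫_ℂ * ⟪delta y, a (delta z)⟫_ℂ))‖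
          + ‖∑ z ∈ s, ∑ y ∈ s, u z * ((starRingEnd ℂ) (v y) *
            ((1 - ⟪ξ y, ξ z⟫_ℂ) * ⟪delta y, a (delta z)⟫_ℂ))‖ := norm_add_le _ _
      _ ≤ M * ((‖u‖^2 + ‖v‖^2)/2) + ε * (C:ℝ) * ‖a‖ * ((‖u‖^2 + ‖v‖^2)/2) := by
          refine add_le_add ?_ hT2bound
          rw [hT1]
          exact hT1bound
      _ = (M + ε * (C:ℝ) * ‖a‖) * ((‖u‖^2 + ‖v‖^2)/2) := by ring
  -- homogeneous form
  have key2 : ∀ (s : Finset X) (u v : l2 X ℂ), (∀ j ∉ s, u j = 0) → (∀ j ∉ s, v j = 0) →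
      ‖⟪v, a u⟫_ℂ‖ ≤ (M + ε * (C:ℝ) * ‖a‖) * (‖u‖ * ‖v‖) := by
    intro s u v hu hv
    have hK0 : 0 ≤ M + ε * (C:ℝ) * ‖a‖ := add_nonneg hM0 (by positivity)
    by_cases hu0 : u = 0
    · rw [hu0, map_zero, inner_zero_right, norm_zero, norm_zero, zero_mul, mul_zero]
    by_cases hv0 : v = 0
    · rw [hv0, inner_zero_left, norm_zero, norm_zero, mul_zero, mul_zero]
    have hun : 0 < ‖u‖ := norm_pos_iff.mpr hu0
    have hvn : 0 < ‖v‖ := norm_pos_iff.mpr hv0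
    set c : ℝ := Real.sqrt (‖v‖ / ‖u‖) with hcdef
    have hc : 0 < c := Real.sqrt_pos.2 (div_pos hvn hun)
    have hc2 : c^2 = ‖v‖ / ‖u‖ := Real.sq_sqrt (le_of_lt (div_pos hvn hun))
    have hu' : ∀ j ∉ s, ((c:ℂ) • u) j = 0 := by
      intro j hj
      rw [lp.coeFn_smul, Pi.smul_apply, hu j hj, smul_zero]
    have hv' : ∀ j ∉ s, (((c⁻¹:ℝ):ℂ) • v) j = 0 := by
      intro j hj
      rw [lp.coeFn_smul, Pi.smul_apply, hv j hj, smul_zero]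
    have h := key s ((c:ℂ) • u) (((c⁻¹:ℝ):ℂ) • v) hu' hv'
    have hinner : ⟪(((c⁻¹:ℝ):ℂ) • v), a ((c:ℂ) • u)⟫_ℂ = ⟪v, a u⟫_ℂ := by
      have hcc : ((c⁻¹:ℝ):ℂ) * ((c:ℝ):ℂ) = 1 := by
        norm_cast
        rw [inv_mul_cancel₀ hc.ne']
      rw [map_smul, inner_smul_left, inner_smul_right, Complex.conj_ofReal, ← mul_assoc,
        hcc, one_mul]
    have hnu : ‖((c:ℂ) • u)‖ = c * ‖u‖ := by
      rw [norm_smul, Complex.norm_real, Real.norm_eq_abs, abs_of_pos hc]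
    have hnv : ‖(((c⁻¹:ℝ):ℂ) • v)‖ = c⁻¹ * ‖v‖ := by
      rw [norm_smul, Complex.norm_real, Real.norm_eq_abs, abs_of_pos (inv_pos.2 hc)]
    rw [hinner, hnu, hnv] at h
    have hU : ‖u‖ ≠ 0 := hun.ne'
    have hV : ‖v‖ ≠ 0 := hvn.ne'
    have harith : (c * ‖u‖)^2 = ‖u‖ * ‖v‖ := by
      have e1 : (c * ‖u‖)^2 = c^2 * ‖u‖^2 := by ring
      rw [e1, hc2, pow_two, ← mul_assoc, div_mul_cancel₀ _ hU, mul_comm]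
    have harith2 : (c⁻¹ * ‖v‖)^2 = ‖u‖ * ‖v‖ := by
      have e1 : (c⁻¹ * ‖v‖)^2 = (c^2)⁻¹ * ‖v‖^2 := by ring
      rw [e1, hc2, inv_div, pow_two, ← mul_assoc, div_mul_cancel₀ _ hV]
    rw [harith, harith2] at h
    calc ‖⟪v, a u⟫_ℂ‖ ≤ (M + ε * (C:ℝ) * ‖a‖) * ((‖u‖ * ‖v‖ + ‖u‖ * ‖v‖)/2) := h
      _ = (M + ε * (C:ℝ) * ‖a‖) * (‖u‖ * ‖v‖) := by ring
  -- density
  have happrox : ∀ f : l2 X ℂ,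
      Filter.Tendsto (fun s : Finset X => projSet s f) Filter.atTop (nhds f) := by
    intro f
    have h : Filter.Tendsto (fun s : Finset X => ∑ i ∈ s, lp.single 2 i (f i))
        Filter.atTop (nhds f) := lp.hasSum_single ENNReal.ofNat_ne_top f
    have heq : (fun s : Finset X => projSet s f)
        = fun s : Finset X => ∑ i ∈ s, lp.single 2 i (f i) := by
      funext s; exact projSet_apply s f
    rw [heq]
    exact h
  have key3 : ∀ f g : l2 X ℂ, ‖⟪g, a f⟫_ℂ‖ ≤ (M + ε * (C:ℝ) * ‖a‖) * (‖f‖ * ‖g‖) := by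
    intro f g
    have h1 : Filter.Tendsto (fun s : Finset X => ‖⟪projSet s g, a (projSet s f)⟫_ℂ‖)
        Filter.atTop (nhds ‖⟪g, a f⟫_ℂ‖) :=
      (Filter.Tendsto.inner (happrox g) ((a.continuous.tendsto f).comp (happrox f))).norm
    have h2 : Filter.Tendsto
        (fun s : Finset X => (M + ε * (C:ℝ) * ‖a‖) * (‖projSet s f‖ * ‖projSet s g‖))
        Filter.atTop (nhds ((M + ε * (C:ℝ) * ‖a‖) * (‖f‖ * ‖g‖))) :=
      Filter.Tendsto.mul tendsto_const_nhds ((happrox f).norm.mul (happrox g).norm)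
    refine le_of_tendsto_of_tendsto' h1 h2 (fun s => ?_)
    refine key2 s (projSet s f) (projSet s g) ?_ ?_ <;>
      · intro j hj
        rw [projSet_coe, if_neg hj]
  have hK0 : 0 ≤ M + ε * (C:ℝ) * ‖a‖ := add_nonneg hM0 (by positivity)
  have hnorm : ‖a‖ ≤ M + ε * (C:ℝ) * ‖a‖ := by
    refine a.opNorm_le_bound hK0 (fun f => ?_)
    by_cases h0 : ‖a f‖ = 0
    · rw [h0]; exact mul_nonneg hK0 (norm_nonneg f)
    · have h1 := key3 f (a f)
      have h2 : ‖⟪a f, a f⟫_ℂ‖ = ‖a f‖^2 := by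
        rw [inner_self_eq_norm_sq_to_K]
        simp [norm_pow]
      rw [h2] at h1
      have hp : 0 < ‖a f‖ := lt_of_le_of_ne (norm_nonneg _) (Ne.symm h0)
      have h3 : ‖a f‖ * ‖a f‖ ≤ ((M + ε * (C:ℝ) * ‖a‖) * ‖f‖) * ‖a f‖ := by
        calc ‖a f‖ * ‖a f‖ = ‖a f‖^2 := (sq _).symm
          _ ≤ (M + ε * (C:ℝ) * ‖a‖) * (‖f‖ * ‖a f‖) := h1
          _ = ((M + ε * (C:ℝ) * ‖a‖) * ‖f‖) * ‖a f‖ := by ring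
      exact le_of_mul_le_mul_right h3 hp
  have hfinal : ε * (C:ℝ) * ‖a‖ ≤ ε' * ‖a‖ := mul_le_mul_of_nonneg_right hεC (norm_nonneg a)
  have : (1 - ε') * ‖a‖ = ‖a‖ - ε' * ‖a‖ := by ring
  rw [this]
  linarith
end
end

section
/- Let X be a discrete metric space with bounded geometry and 0 < R < S. The completely bounded norm of the inverse compression map (ψ_S|_{E_R})^{-1} : ψ_S(E_R) → E_R equals its operator norm: ‖(ψ_S|_{E_R})^{-1}‖_cb = ‖(ψ_S|_{E_R})^{-1}‖. -/
/- ℓ²(X, H) is modeled as `lp (fun _ : X => H) 2`; `delta x` is the standard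
basis vector δ_x of ℓ²(X) = ℓ²(X, ℂ); `projSet s` is the orthogonal projection
of ℓ²(X, H) onto the coordinates in the finite set `s` (for a ball `N(x,S)` this
is the projection `P_x` onto ℓ²(N(x,S))).  The matrix coefficient
a_{y,z} = ⟨a δ_z, δ_y⟩ (linear in the first variable, as in the paper) is
`⟪delta y, a (delta z)⟫_ℂ` in Mathlib's convention (conjugate-linear in the
first slot), and the mathematicians' inner product ⟨u, v⟩ is `⟪v, u⟫_ℂ`. -/

noncomputable section
open scoped InnerProductSpace ComplexOrder ENNReal

attribute [local instance] Classical.propDecidable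

variable {X : Type*} {H : Type*} [NormedAddCommGroup H] [InnerProductSpace ℂ H]

variable (X : Type*) [MetricSpace X]

/-- `a` has propagation at most `R`: its B(H)-valued matrix coefficients vanish at
distance > R. -/
def PropagationLE {H : Type*} [NormedAddCommGroup H] [InnerProductSpace ℂ H]
    (R : ℝ) (a : l2 X H →L[ℂ] l2 X H) : Prop :=
  ∀ y z : X, R < dist y z → ∀ v : H, (a (lp.single 2 z v) : ∀ _ : X, H) y = 0

/-- the norm of ψ_S(a) = (P_x a P_x)_x in the ℓ^∞-product ∏_x B(ℓ²(N(x,S), H)). -/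
def psiNorm {H : Type*} [NormedAddCommGroup H] [InnerProductSpace ℂ H]
    (hfin : ∀ (x : X) (r : ℝ), (Metric.closedBall x r).Finite) (S : ℝ)
    (a : l2 X H →L[ℂ] l2 X H) : ℝ :=
  ⨆ x : X, ‖projSet (hfin x S).toFinset ∘L a ∘L projSet (hfin x S).toFinset‖

/-- the norm of the map (ψ_S|_{E_R})⁻¹ : ψ_S(E_R) → E_R, amplified by the Hilbert
space H (H = ℂ gives the operator norm, H = ℂⁿ the n-th amplification):
sup { ‖a‖ : a of propagation ≤ R, ‖ψ_S(a)‖ ≤ 1 }. -/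
def invNorm (H : Type*) [NormedAddCommGroup H] [InnerProductSpace ℂ H]
    (hfin : ∀ (x : X) (r : ℝ), (Metric.closedBall x r).Finite) (R S : ℝ) : ℝ :=
  sSup { t : ℝ | ∃ a : l2 X H →L[ℂ] l2 X H,
    PropagationLE X R a ∧ psiNorm X hfin S a ≤ 1 ∧ t = ‖a‖ }

/-! ### Auxiliary machinery -/

set_option synthInstance.maxHeartbeats 1000000
set_option maxHeartbeats 1600000

section Aux

variable {Y : Type*} {E F : Type*} [NormedAddCommGroup E] [InnerProductSpace ℂ E]
  [NormedAddCommGroup F] [InnerProductSpace ℂ F]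

private lemma hp2 : (0 : ℝ) < (2 : ℝ≥0∞).toReal := by norm_num

/-- domination criterion for membership in ℓ². -/
lemma memℓp_of_le {f : l2 Y E} {g : Y → F} (h : ∀ x, ‖g x‖ ≤ ‖f x‖) : Memℓp g 2 := by
  apply memℓp_gen
  refine Summable.of_nonneg_of_le (fun x => Real.rpow_nonneg (norm_nonneg _) _)
    (fun x => Real.rpow_le_rpow (norm_nonneg _) (h x) hp2.le) ?_
  exact (lp.memℓp f).summable hp2

lemma l2_norm_le {f : l2 Y E} {g : l2 Y F} (h : ∀ x, ‖f x‖ ≤ ‖g x‖) : ‖f‖ ≤ ‖g‖ := by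
  refine lp.norm_le_of_tsum_le hp2 (norm_nonneg _) ?_
  rw [lp.norm_rpow_eq_tsum hp2 g]
  exact Summable.tsum_le_tsum (fun x => Real.rpow_le_rpow (norm_nonneg _) (h x) hp2.le)
    ((lp.memℓp f).summable hp2) ((lp.memℓp g).summable hp2)

lemma l2_norm_eq {f : l2 Y E} {g : l2 Y F} (h : ∀ x, ‖f x‖ = ‖g x‖) : ‖f‖ = ‖g‖ :=
  le_antisymm (l2_norm_le fun x => (h x).le) (l2_norm_le fun x => (h x).ge)

/-- the diagonal ("multiplication") operator ℓ²(Y,E) → ℓ²(Y,F) associated with a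
uniformly bounded family of operators `T x : E → F`. -/
def mulCLM (T : ∀ _ : Y, E →L[ℂ] F) (hT : ∀ x, ‖T x‖ ≤ 1) : l2 Y E →L[ℂ] l2 Y F :=
  LinearMap.mkContinuous
    { toFun := fun f => (⟨fun x => T x (f x), memℓp_of_le (f := f) fun x =>
        ((T x).le_opNorm _).trans (mul_le_of_le_one_left (norm_nonneg _) (hT x))⟩ : l2 Y F)
      map_add' := fun f g => lp.ext (funext fun x => by simp [lp.coeFn_add]; rfl)
      map_smul' := fun c f => lp.ext (funext fun x => by simp [lp.coeFn_smul]) }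
    1 (fun f => by
      refine le_trans (l2_norm_le (g := f) fun x => ?_) (by simp)
      exact ((T x).le_opNorm _).trans (mul_le_of_le_one_left (norm_nonneg _) (hT x)))

@[simp] lemma mulCLM_apply (T : ∀ _ : Y, E →L[ℂ] F) (hT : ∀ x, ‖T x‖ ≤ 1)
    (f : l2 Y E) (x : Y) : (mulCLM T hT f : ∀ _ : Y, F) x = T x (f x) := rfl

lemma mulCLM_app_norm_le (T : ∀ _ : Y, E →L[ℂ] F) (hT : ∀ x, ‖T x‖ ≤ 1) (f : l2 Y E) :
    ‖mulCLM T hT f‖ ≤ ‖f‖ :=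
  l2_norm_le fun x => ((T x).le_opNorm _).trans (mul_le_of_le_one_left (norm_nonneg _) (hT x))

lemma mulCLM_single (T : ∀ _ : Y, E →L[ℂ] F) (hT : ∀ x, ‖T x‖ ≤ 1) (z : Y) (v : E) :
    mulCLM T hT (lp.single 2 z v) = lp.single 2 z (T z v) := by
  refine lp.ext (funext fun x => ?_)
  by_cases hx : x = z
  · subst hx; simp [lp.single_apply_self]
  · simp [lp.single_apply_ne 2 z _ hx, Pi.single_apply, hx]

lemma projSet_apply_s13 (s : Finset Y) (f : l2 Y E) (x : Y) :
    (projSet s f : ∀ _ : Y, E) x = if x ∈ s then f x else 0 := by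
  have : (projSet s f : ∀ _ : Y, E) x = ∑ y ∈ s, (lp.single 2 y (f y) : l2 Y E) x := by
    simp only [projSet, ContinuousLinearMap.sum_apply]
    rw [lp.coeFn_sum]
    simp [ContinuousLinearMap.comp_apply]
    show ∑ c ∈ s, (lp.single 2 c (f c) : l2 Y E) x = _
    simp [lp.single_apply, Pi.single_apply]
  rw [this]
  by_cases hx : x ∈ s
  · rw [if_pos hx]
    have h2 := Finset.sum_eq_single_of_mem
      (f := fun y => (lp.single 2 y (f y) : l2 Y E) x) x hx
      (fun b _ hb => lp.single_apply_ne 2 b _ (Ne.symm hb))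
    rw [h2]
    exact lp.single_apply_self (E := fun _ : Y => E) 2 x ((f : ∀ _ : Y, E) x)
  · rw [if_neg hx]
    exact Finset.sum_eq_zero fun y hy =>
      lp.single_apply_ne 2 y _ (fun h => hx (by rw [h]; exact hy))

lemma projSet_app_norm_le (s : Finset Y) (f : l2 Y E) : ‖projSet s f‖ ≤ ‖f‖ := by
  refine l2_norm_le fun x => ?_
  rw [projSet_apply_s13]
  split_ifs
  · exact le_rfl
  · simp

lemma mulCLM_projSet_comm (T : ∀ _ : Y, E →L[ℂ] F) (hT : ∀ x, ‖T x‖ ≤ 1) (s : Finset Y)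
    (f : l2 Y E) : mulCLM T hT (projSet s f) = projSet s (mulCLM T hT f) := by
  refine lp.ext (funext fun x => ?_)
  rw [mulCLM_apply, projSet_apply_s13, projSet_apply_s13, mulCLM_apply]
  split_ifs
  · rfl
  · exact map_zero _

lemma norm_PaP_le (a : l2 Y E →L[ℂ] l2 Y E) (s : Finset Y) :
    ‖projSet s ∘L a ∘L projSet s‖ ≤ ‖a‖ := by
  refine ContinuousLinearMap.opNorm_le_bound _ (norm_nonneg a) fun f => ?_
  calc ‖(projSet s ∘L a ∘L projSet s) f‖ = ‖projSet s (a (projSet s f))‖ := rfl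
    _ ≤ ‖a (projSet s f)‖ := projSet_app_norm_le _ _
    _ ≤ ‖a‖ * ‖projSet s f‖ := a.le_opNorm _
    _ ≤ ‖a‖ * ‖f‖ := mul_le_mul_of_nonneg_left (projSet_app_norm_le _ _)
        (ContinuousLinearMap.opNorm_nonneg a)

lemma conj_proj_norm_le (T1 : ∀ _ : Y, E →L[ℂ] F) (hT1 : ∀ x, ‖T1 x‖ ≤ 1)
    (T2 : ∀ _ : Y, F →L[ℂ] E) (hT2 : ∀ x, ‖T2 x‖ ≤ 1)
    (a : l2 Y F →L[ℂ] l2 Y F) (s : Finset Y) :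
    ‖projSet s ∘L (mulCLM T2 hT2 ∘L a ∘L mulCLM T1 hT1) ∘L projSet s‖ ≤
      ‖projSet s ∘L a ∘L projSet s‖ := by
  refine ContinuousLinearMap.opNorm_le_bound _ (ContinuousLinearMap.opNorm_nonneg _) fun f => ?_
  have key : (projSet s ∘L (mulCLM T2 hT2 ∘L a ∘L mulCLM T1 hT1) ∘L projSet s) f =
      mulCLM T2 hT2 ((projSet s ∘L a ∘L projSet s) (mulCLM T1 hT1 f)) := by
    show projSet s (mulCLM T2 hT2 (a (mulCLM T1 hT1 (projSet s f)))) = _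
    rw [mulCLM_projSet_comm T1 hT1 s f, ← mulCLM_projSet_comm T2 hT2 s]
    rfl
  rw [key]
  calc ‖mulCLM T2 hT2 ((projSet s ∘L a ∘L projSet s) (mulCLM T1 hT1 f))‖
      ≤ ‖(projSet s ∘L a ∘L projSet s) (mulCLM T1 hT1 f)‖ := mulCLM_app_norm_le _ _ _
    _ ≤ ‖projSet s ∘L a ∘L projSet s‖ * ‖mulCLM T1 hT1 f‖ :=
        (projSet s ∘L a ∘L projSet s).le_opNorm _
    _ ≤ ‖projSet s ∘L a ∘L projSet s‖ * ‖f‖ :=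
        mul_le_mul_of_nonneg_left (mulCLM_app_norm_le _ _ _)
          (ContinuousLinearMap.opNorm_nonneg _)

end Aux

section Transfer

variable {H' : Type*} [NormedAddCommGroup H'] [InnerProductSpace ℂ H']
variable {Z : Type*} [MetricSpace Z]

lemma norm_block_le_one {hfin : ∀ (x : Z) (r : ℝ), (Metric.closedBall x r).Finite} {S : ℝ}
    {a : l2 Z H' →L[ℂ] l2 Z H'} (hψ : psiNorm Z hfin S a ≤ 1) (x : Z) :
    ‖projSet (hfin x S).toFinset ∘L a ∘L projSet (hfin x S).toFinset‖ ≤ 1 := by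
  have hbdd : BddAbove (Set.range fun x : Z =>
      ‖projSet (hfin x S).toFinset ∘L a ∘L projSet (hfin x S).toFinset‖) := by
    refine ⟨‖a‖, ?_⟩
    rintro - ⟨x, rfl⟩
    exact norm_PaP_le a _
  exact le_trans (le_ciSup hbdd x) hψ

/-- easy direction: conjugating by the isometry ℓ²(Z,ℂ) → ℓ²(Z,H') coming from a unit
vector of H' transfers elements of the scalar unit-ball set to the amplified set. -/
lemma transfer_up (e : H') (he : ‖e‖ = 1)
    (hfin : ∀ (x : Z) (r : ℝ), (Metric.closedBall x r).Finite) (R S : ℝ)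
    {a : l2 Z ℂ →L[ℂ] l2 Z ℂ} (ha : PropagationLE Z R a) (hψ : psiNorm Z hfin S a ≤ 1) :
    ∃ A : l2 Z H' →L[ℂ] l2 Z H',
      PropagationLE Z R A ∧ psiNorm Z hfin S A ≤ 1 ∧ ‖a‖ ≤ ‖A‖ := by
  set T1 : ∀ _ : Z, H' →L[ℂ] ℂ := fun _ => innerSL ℂ e with hT1def
  have hT1 : ∀ x, ‖T1 x‖ ≤ 1 := fun x => by rw [hT1def, innerSL_apply_norm, he]
  set T2 : ∀ _ : Z, ℂ →L[ℂ] H' := fun _ => ContinuousLinearMap.toSpanSingleton ℂ e with hT2def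
  have hT2 : ∀ x, ‖T2 x‖ ≤ 1 := fun x => by
    rw [hT2def, ContinuousLinearMap.norm_toSpanSingleton, he]
  refine ⟨mulCLM T2 hT2 ∘L a ∘L mulCLM T1 hT1, ?_, ?_, ?_⟩
  · intro y z hd v
    have h1 : (mulCLM T2 hT2 ∘L a ∘L mulCLM T1 hT1) (lp.single 2 z v) =
        mulCLM T2 hT2 (a (lp.single 2 z (T1 z v))) := by
      show mulCLM T2 hT2 (a (mulCLM T1 hT1 (lp.single 2 z v))) = _
      rw [mulCLM_single]
    rw [h1, mulCLM_apply, ha y z hd (T1 z v), map_zero]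
  · exact Real.iSup_le
      (fun x => (conj_proj_norm_le T1 hT1 T2 hT2 a _).trans (norm_block_le_one hψ x))
      zero_le_one
  · have hid : ∀ g : l2 Z ℂ, mulCLM T1 hT1 (mulCLM T2 hT2 g) = g := by
      intro g
      refine lp.ext (funext fun x => ?_)
      rw [mulCLM_apply, mulCLM_apply]
      show ⟪e, g x • e⟫_ℂ = g x
      rw [inner_smul_right, inner_self_eq_norm_sq_to_K, he]
      norm_num
    refine ContinuousLinearMap.opNorm_le_bound _ (ContinuousLinearMap.opNorm_nonneg _)
      fun f => ?_
    have h2 : a f = mulCLM T1 hT1 ((mulCLM T2 hT2 ∘L a ∘L mulCLM T1 hT1) (mulCLM T2 hT2 f)) := by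
      show a f = mulCLM T1 hT1 (mulCLM T2 hT2 (a (mulCLM T1 hT1 (mulCLM T2 hT2 f))))
      rw [hid, hid]
    rw [h2]
    calc ‖mulCLM T1 hT1 ((mulCLM T2 hT2 ∘L a ∘L mulCLM T1 hT1) (mulCLM T2 hT2 f))‖
        ≤ ‖(mulCLM T2 hT2 ∘L a ∘L mulCLM T1 hT1) (mulCLM T2 hT2 f)‖ := mulCLM_app_norm_le _ _ _
      _ ≤ ‖mulCLM T2 hT2 ∘L a ∘L mulCLM T1 hT1‖ * ‖mulCLM T2 hT2 f‖ :=
          ContinuousLinearMap.le_opNorm _ _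
      _ ≤ ‖mulCLM T2 hT2 ∘L a ∘L mulCLM T1 hT1‖ * ‖f‖ :=
          mul_le_mul_of_nonneg_left (mulCLM_app_norm_le _ _ _)
            (ContinuousLinearMap.opNorm_nonneg _)

/-- hard direction: compressing by diagonal isometries built from an almost-maximizing
vector transfers an element of the amplified set to a scalar element of almost the
same norm. -/
lemma transfer_down
    (hfin : ∀ (x : Z) (r : ℝ), (Metric.closedBall x r).Finite) (R S : ℝ)
    {a : l2 Z H' →L[ℂ] l2 Z H'} (ha : PropagationLE Z R a) (hψ : psiNorm Z hfin S a ≤ 1)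
    {t : ℝ} (ht0 : 0 ≤ t) (ht : t < ‖a‖) :
    ∃ b : l2 Z ℂ →L[ℂ] l2 Z ℂ,
      PropagationLE Z R b ∧ psiNorm Z hfin S b ≤ 1 ∧ t < ‖b‖ := by
  obtain ⟨ξ, hξ1, hξ2⟩ := a.exists_lt_apply_of_lt_opNorm ht
  set η : l2 Z H' := a ξ with hη
  set v : Z → H' := fun x => ((‖ξ x‖ : ℂ))⁻¹ • ξ x with hv
  set w : Z → H' := fun y => ((‖η y‖ : ℂ))⁻¹ • η y with hw
  have hvle : ∀ x, ‖v x‖ ≤ 1 := by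
    intro x
    by_cases hz : ξ x = 0
    · simp [hv, hz]
    · have : ‖v x‖ = ‖ξ x‖⁻¹ * ‖ξ x‖ := by
        rw [hv]; simp [norm_smul, abs_of_nonneg (norm_nonneg (ξ x))]
      rw [this, inv_mul_cancel₀ (norm_ne_zero_iff.2 hz)]
  have hwle : ∀ y, ‖w y‖ ≤ 1 := by
    intro y
    by_cases hz : η y = 0
    · simp [hw, hz]
    · have : ‖w y‖ = ‖η y‖⁻¹ * ‖η y‖ := by
        rw [hw]; simp [norm_smul, abs_of_nonneg (norm_nonneg (η y))]
      rw [this, inv_mul_cancel₀ (norm_ne_zero_iff.2 hz)]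
  set T1 : ∀ _ : Z, ℂ →L[ℂ] H' := fun x => ContinuousLinearMap.toSpanSingleton ℂ (v x)
    with hT1def
  have hT1 : ∀ x, ‖T1 x‖ ≤ 1 := fun x => by
    rw [hT1def]; rw [ContinuousLinearMap.norm_toSpanSingleton]; exact hvle x
  set T2 : ∀ _ : Z, H' →L[ℂ] ℂ := fun y => innerSL ℂ (w y) with hT2def
  have hT2 : ∀ y, ‖T2 y‖ ≤ 1 := fun y => by
    rw [hT2def]; rw [innerSL_apply_norm]; exact hwle y
  refine ⟨mulCLM T2 hT2 ∘L a ∘L mulCLM T1 hT1, ?_, ?_, ?_⟩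
  · intro y z hd c
    have h1 : (mulCLM T2 hT2 ∘L a ∘L mulCLM T1 hT1) (lp.single 2 z c) =
        mulCLM T2 hT2 (a (lp.single 2 z (T1 z c))) := by
      show mulCLM T2 hT2 (a (mulCLM T1 hT1 (lp.single 2 z c))) = _
      rw [mulCLM_single]
    rw [h1, mulCLM_apply, ha y z hd (T1 z c), map_zero]
  · exact Real.iSup_le
      (fun x => (conj_proj_norm_le T1 hT1 T2 hT2 a _).trans (norm_block_le_one hψ x))
      zero_le_one
  · -- the norm bound via the vector fξ
    set fξ : l2 Z ℂ := ⟨fun x => ((‖ξ x‖ : ℝ) : ℂ), memℓp_of_le (f := ξ)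
      (fun x => by simp)⟩ with hfξ
    have hfξ_apply : ∀ x, (fξ : ∀ _ : Z, ℂ) x = ((‖ξ x‖ : ℝ) : ℂ) := fun x => rfl
    have hfξ_norm : ‖fξ‖ = ‖ξ‖ := l2_norm_eq fun x => by rw [hfξ_apply]; simp
    have hVf : mulCLM T1 hT1 fξ = ξ := by
      refine lp.ext (funext fun x => ?_)
      rw [mulCLM_apply, hfξ_apply]
      show ((‖ξ x‖ : ℝ) : ℂ) • (((‖ξ x‖ : ℂ))⁻¹ • ξ x) = ξ x
      by_cases hz : ξ x = 0
      · simp [hz]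
      · rw [smul_smul, mul_inv_cancel₀, one_smul]
        exact_mod_cast norm_ne_zero_iff.2 hz
    have hbf : ∀ y : Z, ((mulCLM T2 hT2 ∘L a ∘L mulCLM T1 hT1) fξ : ∀ _ : Z, ℂ) y =
        ((‖η y‖ : ℝ) : ℂ) := by
      intro y
      have h1 : (mulCLM T2 hT2 ∘L a ∘L mulCLM T1 hT1) fξ = mulCLM T2 hT2 η := by
        show mulCLM T2 hT2 (a (mulCLM T1 hT1 fξ)) = _
        rw [hVf, hη]
      rw [h1, mulCLM_apply]
      show ⟪((‖η y‖ : ℂ))⁻¹ • η y, η y⟫_ℂ = ((‖η y‖ : ℝ) : ℂ)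
      rw [inner_smul_left, inner_self_eq_norm_sq_to_K, map_inv₀, Complex.conj_ofReal]
      by_cases hz : η y = 0
      · simp [hz]
      · have hne : ((‖η y‖ : ℝ) : ℂ) ≠ 0 := by
          exact_mod_cast norm_ne_zero_iff.2 hz
        field_simp
        rfl
    have hnormbf : ‖(mulCLM T2 hT2 ∘L a ∘L mulCLM T1 hT1) fξ‖ = ‖η‖ :=
      l2_norm_eq fun y => by rw [hbf y]; simp
    have hfξ_le : ‖fξ‖ ≤ 1 := by rw [hfξ_norm]; exact hξ1.le
    calc t < ‖η‖ := hξ2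
      _ = ‖(mulCLM T2 hT2 ∘L a ∘L mulCLM T1 hT1) fξ‖ := hnormbf.symm
      _ ≤ ‖mulCLM T2 hT2 ∘L a ∘L mulCLM T1 hT1‖ :=
        ContinuousLinearMap.unit_le_opNorm _ _ hfξ_le

lemma zero_mem_invSet
    (hfin : ∀ (x : Z) (r : ℝ), (Metric.closedBall x r).Finite) (R S : ℝ) :
    (0 : ℝ) ∈ { t : ℝ | ∃ a : l2 Z H' →L[ℂ] l2 Z H',
      PropagationLE Z R a ∧ psiNorm Z hfin S a ≤ 1 ∧ t = ‖a‖ } := by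
  refine ⟨0, fun y z _ v => by simp, ?_, ContinuousLinearMap.opNorm_zero.symm⟩
  refine Real.iSup_le (fun x => ?_) zero_le_one
  rw [ContinuousLinearMap.zero_comp, ContinuousLinearMap.comp_zero,
    ContinuousLinearMap.opNorm_zero]
  exact zero_le_one

/-- the two suprema coincide whenever `H'` has a unit vector. -/
lemma invNorm_eq_of_unit (e : H') (he : ‖e‖ = 1)
    (hfin : ∀ (x : Z) (r : ℝ), (Metric.closedBall x r).Finite) (R S : ℝ) :
    invNorm Z H' hfin R S = invNorm Z ℂ hfin R S := by
  set Sc := { t : ℝ | ∃ a : l2 Z ℂ →L[ℂ] l2 Z ℂ,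
      PropagationLE Z R a ∧ psiNorm Z hfin S a ≤ 1 ∧ t = ‖a‖ } with hSc
  set Sh := { t : ℝ | ∃ a : l2 Z H' →L[ℂ] l2 Z H',
      PropagationLE Z R a ∧ psiNorm Z hfin S a ≤ 1 ∧ t = ‖a‖ } with hSh
  have hinvc : invNorm Z ℂ hfin R S = sSup Sc := rfl
  have hinvh : invNorm Z H' hfin R S = sSup Sh := rfl
  have h0c : (0 : ℝ) ∈ Sc := zero_mem_invSet hfin R S
  have h0h : (0 : ℝ) ∈ Sh := zero_mem_invSet hfin R S
  have hup : ∀ t ∈ Sc, ∃ t' ∈ Sh, t ≤ t' := by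
    rintro t ⟨a, ha, hψ, rfl⟩
    obtain ⟨A, hA, hAψ, hle⟩ := transfer_up e he hfin R S ha hψ
    exact ⟨‖A‖, ⟨A, hA, hAψ, rfl⟩, hle⟩
  have hdown : ∀ t ∈ Sh, ∀ u : ℝ, 0 ≤ u → u < t → ∃ t' ∈ Sc, u < t' := by
    rintro t ⟨a, ha, hψ, rfl⟩ u hu0 hut
    obtain ⟨b, hb, hbψ, hlt⟩ := transfer_down hfin R S ha hψ hu0 hut
    exact ⟨‖b‖, ⟨b, hb, hbψ, rfl⟩, hlt⟩
  rw [hinvc, hinvh]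
  by_cases hbdd : BddAbove Sc
  · have h0S : (0 : ℝ) ≤ sSup Sc := le_csSup hbdd h0c
    have hhb : ∀ t ∈ Sh, t ≤ sSup Sc := by
      intro t ht
      by_contra hlt
      push_neg at hlt
      obtain ⟨t', ht', h⟩ := hdown t ht (sSup Sc) h0S hlt
      exact absurd (le_csSup hbdd ht') (not_le.2 h)
    have hbdd' : BddAbove Sh := ⟨sSup Sc, fun t ht => hhb t ht⟩
    refine le_antisymm (csSup_le ⟨0, h0h⟩ hhb) (csSup_le ⟨0, h0c⟩ fun t ht => ?_)
    obtain ⟨t', ht', h⟩ := hup t ht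
    exact h.trans (le_csSup hbdd' ht')
  · have hbdd2 : ¬BddAbove Sh := by
      rintro ⟨M, hM⟩
      refine hbdd ⟨M, fun t ht => ?_⟩
      obtain ⟨t', ht', h⟩ := hup t ht
      exact h.trans (hM ht')
    rw [Real.sSup_of_not_bddAbove hbdd, Real.sSup_of_not_bddAbove hbdd2]

end Transfer

/-- the completely bounded norm of (ψ_S|_{E_R})⁻¹, namely the
supremum over n of the norms of its amplifications by ℂⁿ, equals its operator
norm (the amplification by ℂ = ℂ¹). -/
theorem stmt13
    (hfin : ∀ (x : X) (r : ℝ), (Metric.closedBall x r).Finite)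
    (hbg : ∀ r : ℝ, ∃ C : ℕ, ∀ x : X, (Metric.closedBall x r).ncard ≤ C)
    (R S : ℝ) (hR : 0 < R) (hRS : R < S) :
    (⨆ n : ℕ, invNorm X (EuclideanSpace ℂ (Fin (n + 1))) hfin R S) =
      invNorm X ℂ hfin R S := by
  have h : ∀ n : ℕ, invNorm X (EuclideanSpace ℂ (Fin (n + 1))) hfin R S =
      invNorm X ℂ hfin R S := fun n =>
    invNorm_eq_of_unit (EuclideanSpace.single (0 : Fin (n + 1)) (1 : ℂ))
      (by simp [EuclideanSpace.norm_single]) hfin R S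
  simp_rw [h]
  exact ciSup_const
end
end
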